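/- On the VB-mesh there exists a constant C, depending only on a, q, max|b| and max|c| (but not on ε or N), such that ‖A_N‖ ≤ C N²/ε for all N ≥ 2 and all ε with 0 < aε < q. -/

import Mathlib

/-- `ψ(t) = aεt/(q−t)`, the Bakhvalov mesh-generating function on the fine part. -/
noncomputable def psi (a ε q t : ℝ) : ℝ := a * ε * t / (q - t)

/-- `ψ′(t) = aεq/(q−t)²`. -/
noncomputable def psi' (a ε q t : ℝ) : ℝ := a * ε * q / (q - t) ^ 2

/-- The transition parameter `α = (q − √(aεq(1−q+aε)))/(1+aε)` of the VB-mesh. -/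
noncomputable def alph (a ε q : ℝ) : ℝ :=
  (q - Real.sqrt (a * ε * q * (1 - q + a * ε))) / (1 + a * ε)

/-- The mesh-generating function `λ`: `ψ` on `[0,α]`, its tangent line on `[α,1]`. -/
noncomputable def lam (a ε q t : ℝ) : ℝ :=
  if t ≤ alph a ε q then psi a ε q t
  else psi a ε q (alph a ε q) + psi' a ε q (alph a ε q) * (t - alph a ε q)

/-- VB-mesh points `x_i = λ(i/N)`. -/
noncomputable def meshx (a ε q : ℝ) (N i : ℕ) : ℝ := lam a ε q ((i : ℝ) / (N : ℝ))

/-- Mesh steps `h_i = x_i − x_{i−1}`. -/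
noncomputable def meshh (a ε q : ℝ) (N i : ℕ) : ℝ :=
  meshx a ε q N i - meshx a ε q N (i - 1)

/-- Averaged mesh steps `h̄_i = (h_i + h_{i+1})/2`. -/
noncomputable def meshhb (a ε q : ℝ) (N i : ℕ) : ℝ :=
  (meshh a ε q N i + meshh a ε q N (i + 1)) / 2

/-- The coarse (uniform) step `H = ψ′(α)/N` of the VB-mesh. -/
noncomputable def bigH (a ε q : ℝ) (N : ℕ) : ℝ := psi' a ε q (alph a ε q) / N
/-- Maximum absolute row sum norm of a matrix. -/
noncomputable def matNorm {n : ℕ} (A : Matrix (Fin n) (Fin n) ℝ) : ℝ :=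
  ⨆ i, ∑ j, |A i j|

/-- Maximum norm of a vector. -/
noncomputable def vecNorm {n : ℕ} (v : Fin n → ℝ) : ℝ := ⨆ i, |v i|

/-- The upwind finite-difference matrix `A_N` on the mesh `x` for
`-ε u'' - b u' + c u`, with Dirichlet rows `0` and `N`. -/
noncomputable def upwind (b c : ℝ → ℝ) (ε : ℝ) (N : ℕ) (x : ℕ → ℝ) :
    Matrix (Fin (N + 1)) (Fin (N + 1)) ℝ :=
  fun i j =>
    let h : ℕ → ℝ := fun k => x k - x (k - 1)
    let hb : ℕ → ℝ := fun k => (h k + h (k + 1)) / 2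
    if (i : ℕ) = 0 ∨ (i : ℕ) = N then (if j = i then 1 else 0)
    else if (j : ℕ) + 1 = (i : ℕ) then -ε / (h (i : ℕ) * hb (i : ℕ))
    else if (j : ℕ) = (i : ℕ) + 1 then
      -ε / (h ((i : ℕ) + 1) * hb (i : ℕ)) - b (x (i : ℕ)) / h ((i : ℕ) + 1)
    else if j = i then
      ε / (h (i : ℕ) * hb (i : ℕ)) +
        (ε / (h ((i : ℕ) + 1) * hb (i : ℕ)) + b (x (i : ℕ)) / h ((i : ℕ) + 1)) +
        c (x (i : ℕ))
    else 0


lemma psi_diff {q a ε u v : ℝ} (hq0 : 0 < q) (ha : 0 < a) (hε : 0 < ε)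
    (hu : 0 ≤ u) (huv : u ≤ v) (hv : v < q) :
    a * ε / q * (v - u) ≤ psi a ε q v - psi a ε q u := by
  have hqu : 0 < q - u := by linarith
  have hqv : 0 < q - v := by linarith
  have heq : psi a ε q v - psi a ε q u = a * ε * q * (v - u) / ((q - u) * (q - v)) := by
    unfold psi
    field_simp
    ring
  rw [heq, div_mul_eq_mul_div, div_le_div_iff₀ hq0 (by positivity)]
  have h1 : (q - u) * (q - v) ≤ q * q := by nlinarith
  nlinarith [mul_nonneg (mul_nonneg ha.le hε.le) (sub_nonneg.2 huv)]

lemma alph_facts {q a ε : ℝ} (hq0 : 0 < q) (hq1 : q < 1) (ha : 0 < a)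
    (hε : 0 < ε) (haε : a * ε < q) : 0 < alph a ε q ∧ alph a ε q < q := by
  have he : 0 < a * ε := by positivity
  have harg : 0 ≤ a * ε * q * (1 - q + a * ε) := by nlinarith [mul_pos (mul_pos he hq0) (show (0:ℝ) < 1 - q + a * ε by linarith)]
  have hr0 : 0 ≤ Real.sqrt (a * ε * q * (1 - q + a * ε)) := Real.sqrt_nonneg _
  have hr2 : Real.sqrt (a * ε * q * (1 - q + a * ε)) ^ 2 = a * ε * q * (1 - q + a * ε) :=
    Real.sq_sqrt harg
  have hrq : Real.sqrt (a * ε * q * (1 - q + a * ε)) < q := by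
    have h1 : Real.sqrt (a * ε * q * (1 - q + a * ε)) ^ 2 < q ^ 2 := by
      nlinarith [mul_lt_mul_of_pos_left (show 1 - q + a * ε < 1 by linarith) (mul_pos he hq0),
        mul_lt_mul_of_pos_right haε hq0]
    nlinarith
  unfold alph
  constructor
  · apply div_pos (by linarith) (by linarith)
  · rw [div_lt_iff₀ (by linarith)]
    nlinarith

lemma lam_zero {q a ε : ℝ} (hq0 : 0 < q) (hq1 : q < 1) (ha : 0 < a)
    (hε : 0 < ε) (haε : a * ε < q) : lam a ε q 0 = 0 := by
  obtain ⟨hα0, _⟩ := alph_facts hq0 hq1 ha hε haε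
  rw [lam, if_pos hα0.le]
  unfold psi
  simp

lemma lam_one {q a ε : ℝ} (hq0 : 0 < q) (hq1 : q < 1) (ha : 0 < a)
    (hε : 0 < ε) (haε : a * ε < q) : lam a ε q 1 = 1 := by
  obtain ⟨hα0, hαq⟩ := alph_facts hq0 hq1 ha hε haε
  have hα1 : ¬ (1:ℝ) ≤ alph a ε q := by linarith
  rw [lam, if_neg hα1]
  set α := alph a ε q with hαdef
  have he1 : (0:ℝ) < 1 + a * ε := by positivity
  have hαe : α * (1 + a * ε) = q - Real.sqrt (a * ε * q * (1 - q + a * ε)) := by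
    rw [hαdef, alph]
    field_simp
  have harg : 0 ≤ a * ε * q * (1 - q + a * ε) := by
    have he : 0 < a * ε := by positivity
    nlinarith [mul_pos (mul_pos he hq0) (show (0:ℝ) < 1 - q + a * ε by linarith)]
  have hkey : (q - α * (1 + a * ε)) ^ 2 = a * ε * q * (1 - q + a * ε) := by
    rw [hαe]
    have h2 : q - (q - Real.sqrt (a * ε * q * (1 - q + a * ε))) =
        Real.sqrt (a * ε * q * (1 - q + a * ε)) := by ring
    rw [h2]
    exact Real.sq_sqrt harg
  have hs : q - α ≠ 0 := ne_of_gt (by linarith)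
  have hmain : (1 + a * ε) * (a * ε * α * (q - α) + a * ε * q * (1 - α)) =
      (1 + a * ε) * (q - α) ^ 2 := by linear_combination (-1 : ℝ) * hkey
  have hmain2 : a * ε * α * (q - α) + a * ε * q * (1 - α) = (q - α) ^ 2 :=
    mul_left_cancel₀ (ne_of_gt he1) hmain
  unfold psi psi'
  field_simp
  linear_combination hmain2

lemma lam_diff {q a ε u v : ℝ} (hq0 : 0 < q) (hq1 : q < 1) (ha : 0 < a)
    (hε : 0 < ε) (haε : a * ε < q) (hu : 0 ≤ u) (huv : u ≤ v) :
    a * ε / q * (v - u) ≤ lam a ε q v - lam a ε q u := by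
  obtain ⟨hα0, hαq⟩ := alph_facts hq0 hq1 ha hε haε
  set α := alph a ε q with hαdef
  have hslope : a * ε / q ≤ psi' a ε q α := by
    unfold psi'
    rw [div_le_div_iff₀ hq0 (pow_pos (by linarith) 2)]
    nlinarith [mul_pos (mul_pos ha hε) (mul_pos hα0 (show 0 < 2*q - α by linarith))]
  rcases le_or_gt v α with hvα | hvα
  · rw [lam, lam, if_pos hvα, if_pos (le_trans huv hvα)]
    exact psi_diff hq0 ha hε hu huv (lt_of_le_of_lt hvα hαq)
  · rcases le_or_gt u α with huα | huα
    · rw [lam, lam, if_neg (not_le.2 hvα), if_pos huα]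
      have h1 := psi_diff hq0 ha hε hu huα hαq
      have h2 : a * ε / q * (v - α) ≤ psi' a ε q α * (v - α) :=
        mul_le_mul_of_nonneg_right hslope (by linarith)
      linarith
    · rw [lam, lam, if_neg (not_le.2 hvα), if_neg (not_le.2 huα)]
      have h2 : a * ε / q * (v - u) ≤ psi' a ε q α * (v - u) :=
        mul_le_mul_of_nonneg_right hslope (by linarith)
      have h3 : (psi a ε q α + psi' a ε q α * (v - α)) -
          (psi a ε q α + psi' a ε q α * (u - α)) = psi' a ε q α * (v - u) := by ring
      linarith


lemma meshh_lb {q a ε : ℝ} (hq0 : 0 < q) (hq1 : q < 1) (ha : 0 < a)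
    (hε : 0 < ε) (haε : a * ε < q) {N k : ℕ} (hN : 0 < N) (hk1 : 1 ≤ k) :
    a * ε / (q * N) ≤ meshh a ε q N k := by
  have hNp : (0:ℝ) < N := Nat.cast_pos.2 hN
  have hkp : (1:ℝ) ≤ (k:ℝ) := by exact_mod_cast hk1
  unfold meshh meshx
  have hcast : ((k - 1 : ℕ) : ℝ) = (k : ℝ) - 1 := by
    push_cast [Nat.cast_sub hk1]
    ring
  rw [hcast]
  have hd := lam_diff (u := ((k:ℝ) - 1)/N) (v := (k:ℝ)/N) hq0 hq1 ha hε haε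
    (div_nonneg (by linarith) hNp.le) (by gcongr <;> linarith)
  have heq : a * ε / q * ((k:ℝ)/N - ((k:ℝ) - 1)/N) = a * ε / (q * N) := by
    field_simp
    ring
  linarith

lemma meshx_mem {q a ε : ℝ} (hq0 : 0 < q) (hq1 : q < 1) (ha : 0 < a)
    (hε : 0 < ε) (haε : a * ε < q) {N i : ℕ} (hN : 0 < N) (hi : i ≤ N) :
    meshx a ε q N i ∈ Set.Icc (0:ℝ) 1 := by
  have hNp : (0:ℝ) < N := Nat.cast_pos.2 hN
  have ht0 : 0 ≤ (i:ℝ)/N := by positivity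
  have ht1 : (i:ℝ)/N ≤ 1 := by
    rw [div_le_one hNp]; exact_mod_cast hi
  have h1 := lam_diff (u := 0) (v := (i:ℝ)/N) hq0 hq1 ha hε haε le_rfl ht0
  have h2 := lam_diff (u := (i:ℝ)/N) (v := 1) hq0 hq1 ha hε haε ht0 ht1
  rw [lam_zero hq0 hq1 ha hε haε] at h1
  rw [lam_one hq0 hq1 ha hε haε] at h2
  have hnn : 0 ≤ a * ε / q := by positivity
  unfold meshx
  constructor
  · nlinarith
  · nlinarith



set_option maxHeartbeats 1000000 in
theorem stmt_9 (q a β : ℝ) (hq0 : 0 < q) (hq1 : q < 1) (ha : 0 < a) (hβ : 0 < β)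
    (b c : ℝ → ℝ) (hb : ContinuousOn b (Set.Icc 0 1)) (hc : ContinuousOn c (Set.Icc 0 1))
    (hbl : ∀ t ∈ Set.Icc (0 : ℝ) 1, β ≤ b t)
    (hcl : ∀ t ∈ Set.Icc (0 : ℝ) 1, 0 ≤ c t) :
    ∃ C : ℝ, 0 < C ∧
      ∀ (ε : ℝ) (N : ℕ), 0 < ε → a * ε < q → 2 ≤ N →
        matNorm (upwind b c ε N (meshx a ε q N)) ≤ C * (N : ℝ) ^ 2 / ε := by
  obtain ⟨Bb, hBb⟩ := IsCompact.exists_bound_of_continuousOn isCompact_Icc hb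
  obtain ⟨Bc, hBc⟩ := IsCompact.exists_bound_of_continuousOn isCompact_Icc hc
  have hBb0 : 0 ≤ Bb := le_trans (norm_nonneg _) (hBb 0 (by norm_num))
  have hBc0 : 0 ≤ Bc := le_trans (norm_nonneg _) (hBc 0 (by norm_num))
  obtain ⟨K, hKdef⟩ : ∃ K : ℝ, K = 2 * q ^ 2 / a ^ 2 + Bb * q / a + Bc * q / a := ⟨_, rfl⟩
  have hK0 : 0 ≤ K := by
    have h1 : 0 ≤ 2 * q ^ 2 / a ^ 2 := by positivity
    have h2 : 0 ≤ Bb * q / a := div_nonneg (mul_nonneg hBb0 hq0.le) ha.le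
    have h3 : 0 ≤ Bc * q / a := div_nonneg (mul_nonneg hBc0 hq0.le) ha.le
    rw [hKdef]
    linarith
  have hqa : (0:ℝ) < q / (4 * a) := by positivity
  refine ⟨3 * K + q / (4 * a), by linarith, ?_⟩
  intro ε N hε haε hN2
  have hN0 : 0 < N := by omega
  have hNR : (2:ℝ) ≤ (N:ℝ) := by exact_mod_cast hN2
  have hNp : (0:ℝ) < (N:ℝ) := by linarith
  obtain ⟨m, hm⟩ : ∃ m : ℝ, m = a * ε / (q * (N:ℝ)) := ⟨_, rfl⟩
  have hm0 : 0 < m := by rw [hm]; positivity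
  have hstep : ∀ k : ℕ, 1 ≤ k → m ≤ meshh a ε q N k := fun k hk => by
    rw [hm]; exact meshh_lb hq0 hq1 ha hε haε hN0 hk
  have hT0 : (0:ℝ) < (N:ℝ)^2/ε := by positivity
  have hN4 : (4:ℝ) ≤ (N:ℝ)^2 := by nlinarith
  have hq4 : 0 ≤ q * ((N:ℝ)^2 - 4) := mul_nonneg hq0.le (by linarith)
  have hfF : ε / (m * m) = q^2/a^2 * ((N:ℝ)^2/ε) := by
    rw [hm]; field_simp
  have hG : Bb / m ≤ Bb * q / a * ((N:ℝ)^2/ε) := by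
    have hG1 : Bb / m = Bb * q / a * ((N:ℝ)/ε) := by rw [hm]; field_simp
    rw [hG1]
    have h2 : (N:ℝ)/ε ≤ (N:ℝ)^2/ε := by gcongr; nlinarith
    exact mul_le_mul_of_nonneg_left h2 (div_nonneg (mul_nonneg hBb0 hq0.le) ha.le)
  have hH : Bc ≤ Bc * q / a * ((N:ℝ)^2/ε) := by
    have h1 : (1:ℝ) ≤ q / a * ((N:ℝ)^2/ε) := by
      rw [div_mul_div_comm, one_le_div (by positivity)]
      nlinarith [hq4]
    calc Bc = Bc * 1 := by ring
      _ ≤ Bc * (q / a * ((N:ℝ)^2/ε)) := mul_le_mul_of_nonneg_left h1 hBc0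
      _ = Bc * q / a * ((N:ℝ)^2/ε) := by ring
  unfold matNorm
  apply ciSup_le
  intro i
  by_cases hi0 : (i:ℕ) = 0 ∨ (i:ℕ) = N
  · have hrow : ∀ j : Fin (N+1), upwind b c ε N (meshx a ε q N) i j
        = if j = i then 1 else 0 := by
      intro j; simp only [upwind]; rw [if_pos hi0]
    have hb1 : (1:ℝ) ≤ q/(4*a) * ((N:ℝ)^2/ε) := by
      rw [div_mul_div_comm, one_le_div (by positivity)]
      nlinarith [hq4]
    calc ∑ j, |upwind b c ε N (meshx a ε q N) i j|
        = ∑ j : Fin (N+1), |if j = i then (1:ℝ) else 0| := by simp_rw [hrow]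
      _ = 1 := by simp [apply_ite abs]
      _ ≤ (3*K + q/(4*a)) * ((N:ℝ)^2/ε) := by linarith [hb1, mul_nonneg hK0 hT0.le]
      _ = (3*K + q/(4*a)) * (N:ℝ)^2/ε := by ring
  · push_neg at hi0
    obtain ⟨hi1, hiN⟩ := hi0
    have hii1 : 1 ≤ (i:ℕ) := Nat.one_le_iff_ne_zero.2 hi1
    have hiiN : (i:ℕ) < N := lt_of_le_of_ne (Nat.lt_succ_iff.mp i.isLt) hiN
    have hj1lt : (i:ℕ) - 1 < N + 1 := by omega
    have hj2lt : (i:ℕ) < N + 1 := by omega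
    have hj3lt : (i:ℕ) + 1 < N + 1 := by omega
    obtain ⟨j1, hj1⟩ : ∃ j : Fin (N+1), j = ⟨(i:ℕ) - 1, hj1lt⟩ := ⟨_, rfl⟩
    obtain ⟨j3, hj3⟩ : ∃ j : Fin (N+1), j = ⟨(i:ℕ) + 1, hj3lt⟩ := ⟨_, rfl⟩
    obtain ⟨S, hS⟩ : ∃ S : Finset (Fin (N+1)), S = {j1, i, j3} := ⟨_, rfl⟩
    have hi0' : ¬((i:ℕ) = 0 ∨ (i:ℕ) = N) := by omega
    -- mesh quantities
    have hhi : m ≤ meshh a ε q N (i:ℕ) := hstep _ hii1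
    have hhi1 : m ≤ meshh a ε q N ((i:ℕ)+1) := hstep _ (by omega)
    have hav : m ≤ (meshh a ε q N (i:ℕ) + meshh a ε q N ((i:ℕ)+1))/2 := by linarith
    have hD1 : m * m ≤ meshh a ε q N (i:ℕ) *
        ((meshh a ε q N (i:ℕ) + meshh a ε q N ((i:ℕ)+1))/2) :=
      mul_le_mul hhi hav hm0.le (by linarith)
    have hD2 : m * m ≤ meshh a ε q N ((i:ℕ)+1) *
        ((meshh a ε q N (i:ℕ) + meshh a ε q N ((i:ℕ)+1))/2) :=
      mul_le_mul hhi1 hav hm0.le (by linarith)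
    have hmm : (0:ℝ) < m * m := by positivity
    have hxm := meshx_mem hq0 hq1 ha hε haε hN0 (le_of_lt hiiN)
    have hbx : |b (meshx a ε q N (i:ℕ))| ≤ Bb := by
      have := hBb _ hxm
      rwa [Real.norm_eq_abs] at this
    have hcx : |c (meshx a ε q N (i:ℕ))| ≤ Bc := by
      have := hBc _ hxm
      rwa [Real.norm_eq_abs] at this
    obtain ⟨F, hFd⟩ : ∃ F : ℝ, F = q^2/a^2*((N:ℝ)^2/ε) := ⟨_, rfl⟩
    obtain ⟨GG, hGd⟩ : ∃ G : ℝ, G = Bb*q/a*((N:ℝ)^2/ε) := ⟨_, rfl⟩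
    obtain ⟨HH, hHd⟩ : ∃ H : ℝ, H = Bc*q/a*((N:ℝ)^2/ε) := ⟨_, rfl⟩
    have hfF' : ε / (m * m) = F := by rw [hFd]; exact hfF
    have hG' : Bb / m ≤ GG := by rw [hGd]; exact hG
    have hH' : Bc ≤ HH := by rw [hHd]; exact hH
    have hKT : K * ((N:ℝ)^2/ε) = F + F + GG + HH := by
      rw [hKdef, hFd, hGd, hHd]; ring
    have hF0 : 0 ≤ F := by
      rw [hFd]; positivity
    have hG0 : 0 ≤ GG := by
      rw [hGd]
      exact mul_nonneg (div_nonneg (mul_nonneg hBb0 hq0.le) ha.le) hT0.le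
    have hH0 : 0 ≤ HH := by
      rw [hHd]
      exact mul_nonneg (div_nonneg (mul_nonneg hBc0 hq0.le) ha.le) hT0.le
    have hF1 : ε / (meshh a ε q N (i:ℕ) *
        ((meshh a ε q N (i:ℕ) + meshh a ε q N ((i:ℕ)+1))/2)) ≤ F := by
      rw [← hfF']
      gcongr
    have hF2 : ε / (meshh a ε q N ((i:ℕ)+1) *
        ((meshh a ε q N (i:ℕ) + meshh a ε q N ((i:ℕ)+1))/2)) ≤ F := by
      rw [← hfF']
      gcongr
    have hGb : |b (meshx a ε q N (i:ℕ))| / meshh a ε q N ((i:ℕ)+1) ≤ GG :=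
      le_trans (div_le_div₀ hBb0 hbx hm0 hhi1) hG'
    -- the three entries
    have e1 : upwind b c ε N (meshx a ε q N) i j1 =
        -ε / (meshh a ε q N (i:ℕ) *
          ((meshh a ε q N (i:ℕ) + meshh a ε q N ((i:ℕ)+1))/2)) := by
      simp only [upwind]
      rw [if_neg hi0', if_pos (show ((j1:ℕ) + 1 = (i:ℕ)) by rw [hj1]; simp; omega)]
      rfl
    have e3 : upwind b c ε N (meshx a ε q N) i j3 =
        -ε / (meshh a ε q N ((i:ℕ)+1) *
          ((meshh a ε q N (i:ℕ) + meshh a ε q N ((i:ℕ)+1))/2))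
        - b (meshx a ε q N (i:ℕ)) / meshh a ε q N ((i:ℕ)+1) := by
      simp only [upwind]
      rw [if_neg hi0', if_neg (show ¬((j3:ℕ) + 1 = (i:ℕ)) by rw [hj3]; simp; omega),
        if_pos (show ((j3:ℕ) = (i:ℕ) + 1) by rw [hj3])]
      rfl
    have e2 : upwind b c ε N (meshx a ε q N) i i =
        ε / (meshh a ε q N (i:ℕ) *
          ((meshh a ε q N (i:ℕ) + meshh a ε q N ((i:ℕ)+1))/2))
        + (ε / (meshh a ε q N ((i:ℕ)+1) *
          ((meshh a ε q N (i:ℕ) + meshh a ε q N ((i:ℕ)+1))/2))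
          + b (meshx a ε q N (i:ℕ)) / meshh a ε q N ((i:ℕ)+1))
        + c (meshx a ε q N (i:ℕ)) := by
      simp only [upwind]
      rw [if_neg hi0', if_neg (show ¬((i:ℕ) + 1 = (i:ℕ)) by omega),
        if_neg (show ¬((i:ℕ) = (i:ℕ) + 1) by omega)]
      rfl
    -- entries outside S vanish
    have hzero : ∀ j ∈ Finset.univ, j ∉ S → |upwind b c ε N (meshx a ε q N) i j| = 0 := by
      intro j _ hj
      rw [hS] at hj
      simp only [Finset.mem_insert, Finset.mem_singleton, not_or] at hj
      obtain ⟨hn1, hn2, hn3⟩ := hj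
      have c1 : ¬((j:ℕ) + 1 = (i:ℕ)) := by
        intro h
        exact hn1 (by rw [hj1]; exact Fin.ext (by simp; omega))
      have c2 : ¬((j:ℕ) = (i:ℕ) + 1) := by
        intro h
        exact hn3 (by rw [hj3]; exact Fin.ext (by simp; omega))
      simp only [upwind]
      rw [if_neg hi0', if_neg c1, if_neg c2, if_neg hn2, abs_zero]
    have hsum : ∑ j ∈ S, |upwind b c ε N (meshx a ε q N) i j| =
        ∑ j, |upwind b c ε N (meshx a ε q N) i j| :=
      Finset.sum_subset (Finset.subset_univ S) hzero
    -- bound on each entry in S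
    have hM : ∀ j ∈ S, |upwind b c ε N (meshx a ε q N) i j| ≤ K * ((N:ℝ)^2/ε) := by
      intro j hj
      rw [hS] at hj
      simp only [Finset.mem_insert, Finset.mem_singleton] at hj
      rcases hj with hj | hj | hj
      · rw [hj, e1, neg_div, abs_neg, abs_of_nonneg (div_nonneg hε.le (by linarith)), hKT]
        linarith [hF1]
      · rw [hj, e2, hKT]
        have habs := abs_add_le (ε / (meshh a ε q N (i:ℕ) *
            ((meshh a ε q N (i:ℕ) + meshh a ε q N ((i:ℕ)+1))/2))
          + (ε / (meshh a ε q N ((i:ℕ)+1) *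
            ((meshh a ε q N (i:ℕ) + meshh a ε q N ((i:ℕ)+1))/2))
            + b (meshx a ε q N (i:ℕ)) / meshh a ε q N ((i:ℕ)+1)))
          (c (meshx a ε q N (i:ℕ)))
        have habs2 := abs_add_le (ε / (meshh a ε q N (i:ℕ) *
            ((meshh a ε q N (i:ℕ) + meshh a ε q N ((i:ℕ)+1))/2)))
          (ε / (meshh a ε q N ((i:ℕ)+1) *
            ((meshh a ε q N (i:ℕ) + meshh a ε q N ((i:ℕ)+1))/2))
            + b (meshx a ε q N (i:ℕ)) / meshh a ε q N ((i:ℕ)+1))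
        have habs3 := abs_add_le (ε / (meshh a ε q N ((i:ℕ)+1) *
            ((meshh a ε q N (i:ℕ) + meshh a ε q N ((i:ℕ)+1))/2)))
          (b (meshx a ε q N (i:ℕ)) / meshh a ε q N ((i:ℕ)+1))
        have hbdiv : |b (meshx a ε q N (i:ℕ)) / meshh a ε q N ((i:ℕ)+1)| =
            |b (meshx a ε q N (i:ℕ))| / meshh a ε q N ((i:ℕ)+1) := by
          rw [abs_div, abs_of_pos (show (0:ℝ) < meshh a ε q N ((i:ℕ)+1) by linarith)]
        have ha1 : |ε / (meshh a ε q N (i:ℕ) *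
            ((meshh a ε q N (i:ℕ) + meshh a ε q N ((i:ℕ)+1))/2))| =
            ε / (meshh a ε q N (i:ℕ) *
            ((meshh a ε q N (i:ℕ) + meshh a ε q N ((i:ℕ)+1))/2)) :=
          abs_of_nonneg (div_nonneg hε.le (by linarith))
        have ha2 : |ε / (meshh a ε q N ((i:ℕ)+1) *
            ((meshh a ε q N (i:ℕ) + meshh a ε q N ((i:ℕ)+1))/2))| =
            ε / (meshh a ε q N ((i:ℕ)+1) *
            ((meshh a ε q N (i:ℕ) + meshh a ε q N ((i:ℕ)+1))/2)) :=
          abs_of_nonneg (div_nonneg hε.le (by linarith))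
        rw [ha1] at habs2
        rw [ha2, hbdiv] at habs3
        linarith [hF1, hF2, hGb, hcx, habs, habs2, habs3, hH']
      · rw [hj, e3, neg_div, hKT]
        have habs : |(-ε / (meshh a ε q N ((i:ℕ)+1) *
            ((meshh a ε q N (i:ℕ) + meshh a ε q N ((i:ℕ)+1))/2)))
            - b (meshx a ε q N (i:ℕ)) / meshh a ε q N ((i:ℕ)+1)| ≤
            |(-ε / (meshh a ε q N ((i:ℕ)+1) *
            ((meshh a ε q N (i:ℕ) + meshh a ε q N ((i:ℕ)+1))/2)))| +
            |b (meshx a ε q N (i:ℕ)) / meshh a ε q N ((i:ℕ)+1)| := abs_sub _ _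
        rw [neg_div, abs_neg, abs_of_nonneg (div_nonneg hε.le (by linarith))] at habs
        have hbdiv : |b (meshx a ε q N (i:ℕ)) / meshh a ε q N ((i:ℕ)+1)| =
            |b (meshx a ε q N (i:ℕ))| / meshh a ε q N ((i:ℕ)+1) := by
          rw [abs_div, abs_of_pos (show (0:ℝ) < meshh a ε q N ((i:ℕ)+1) by linarith)]
        rw [hbdiv] at habs
        linarith [hF2, hGb, habs]
    -- sum up
    have hcard : S.card ≤ 3 := by
      rw [hS]
      have h1 := Finset.card_insert_le j1 ({i, j3} : Finset (Fin (N+1)))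
      have h2 := Finset.card_insert_le i ({j3} : Finset (Fin (N+1)))
      simp only [Finset.card_singleton] at h1 h2
      omega
    calc ∑ j, |upwind b c ε N (meshx a ε q N) i j|
        = ∑ j ∈ S, |upwind b c ε N (meshx a ε q N) i j| := hsum.symm
      _ ≤ S.card • (K * ((N:ℝ)^2/ε)) := Finset.sum_le_card_nsmul S _ _ hM
      _ = (S.card : ℝ) * (K * ((N:ℝ)^2/ε)) := by rw [nsmul_eq_mul]
      _ ≤ 3 * (K * ((N:ℝ)^2/ε)) := by
          have hKT : 0 ≤ K * ((N:ℝ)^2/ε) := mul_nonneg hK0 hT0.le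
          have : (S.card : ℝ) ≤ 3 := by exact_mod_cast hcard
          exact mul_le_mul_of_nonneg_right this hKT
      _ ≤ (3*K + q/(4*a)) * (N:ℝ)^2/ε := by
          have h1 : 0 ≤ q/(4*a) * ((N:ℝ)^2/ε) := by positivity
          have h2 : (3*K + q/(4*a)) * (N:ℝ)^2/ε = 3*(K*((N:ℝ)^2/ε)) + q/(4*a)*((N:ℝ)^2/ε) := by
            ring
          linarith
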